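/- Let A and Y be finite nonempty index sets, and adopt the setting where for each a ∈ A, P̄_{a,y} is the empirical frequency of the measurable event E_{a,y} over n_a i.i.d. samples, P_{a,y} = Pr[X^a_1 ∈ E_{a,y}], and r_{a,y} are Laplace Lap(1/ε) random variables each independent of the corresponding sample family. Let n_min = min_{a ∈ A} n_a, let t > 0 and assume ε ≥ t. Then Pr[∃ a ∈ A, y ∈ Y : |(P̄_{a,y} + r_{a,y}/n_a) − P_{a,y}| > t] ≤ 3·|A|·|Y|·exp(−n_min·t²/2). Consequently, if n_min ≥ (2/t²)·ln(3·|A|·|Y|/δ), equivalently (with t = α/2) n_min ≥ (8/α²)·ln(3·|A|·|Y|/δ), then this probability is at most δ. -/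

import Mathlib

open MeasureTheory ProbabilityTheory
open Real Set
open scoped ENNReal


lemma hoeffding_mgf_bern {p : ℝ} (hp0 : 0 ≤ p) (hp1 : p ≤ 1) (l : ℝ) :
    (1 - p) * exp (-(l * p)) + p * exp (l * (1 - p)) ≤ exp (l ^ 2 / 8) := by
  have hD : ∀ x : ℝ, 0 < 1 - p + p * exp x := by
    intro x
    rcases eq_or_lt_of_le hp0 with h | h
    · simp [← h]
    · nlinarith [exp_pos x, mul_pos h (exp_pos x)]
  -- derivative setup
  set G : ℝ → ℝ := fun x => x / 4 + p - p * exp x / (1 - p + p * exp x) with hGdef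
  have hDder : ∀ x : ℝ, HasDerivAt (fun x => 1 - p + p * exp x) (p * exp x) x := by
    intro x
    simpa using ((Real.hasDerivAt_exp x).const_mul p).const_add (1 - p)
  have hGder : ∀ x : ℝ, HasDerivAt G
      (1 / 4 - ((p * exp x) * (1 - p + p * exp x) - (p * exp x) * (p * exp x)) /
        (1 - p + p * exp x) ^ 2) x := by
    intro x
    have h1 : HasDerivAt (fun x : ℝ => x / 4 + p) (1 / 4) x := by
      simpa using ((hasDerivAt_id x).div_const 4).add_const p
    have h2 : HasDerivAt (fun x => p * exp x / (1 - p + p * exp x))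
        (((p * exp x) * (1 - p + p * exp x) - (p * exp x) * (p * exp x)) /
          (1 - p + p * exp x) ^ 2) x := by
      have hnum : HasDerivAt (fun x => p * exp x) (p * exp x) x :=
        (Real.hasDerivAt_exp x).const_mul p
      exact hnum.div (hDder x) (hD x).ne'
    exact h1.sub h2
  have hGderiv_nonneg : ∀ x : ℝ, 0 ≤ deriv G x := by
    intro x
    rw [(hGder x).deriv]
    set E := p * exp x with hE
    set D := 1 - p + p * exp x with hDdef
    have hDpos : 0 < D := hD x
    have hEnn : 0 ≤ E := mul_nonneg hp0 (exp_pos x).le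
    have key : (E * D - E * E) / D ^ 2 ≤ 1 / 4 := by
      rw [div_le_iff₀ (by positivity)]
      nlinarith [sq_nonneg ((1 - p) - E)]
    linarith
  have hGmono : Monotone G := by
    apply monotone_of_deriv_nonneg
    · exact fun x => ((hGder x).differentiableAt)
    · exact hGderiv_nonneg
  have hG0 : G 0 = 0 := by simp [hGdef]
  -- F
  set F : ℝ → ℝ := fun x => x ^ 2 / 8 + p * x - Real.log (1 - p + p * exp x) with hFdef
  have hFder : ∀ x : ℝ, HasDerivAt F (G x) x := by
    intro x
    have h1 : HasDerivAt (fun x : ℝ => x ^ 2 / 8 + p * x) (x / 4 + p) x := by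
      have := ((hasDerivAt_pow 2 x).div_const 8).add ((hasDerivAt_id x).const_mul p)
      refine this.congr_deriv ?_
      ring
    have h2 : HasDerivAt (fun x => Real.log (1 - p + p * exp x))
        (p * exp x / (1 - p + p * exp x)) x := (hDder x).log (hD x).ne'
    exact h1.sub h2
  have hF0 : F 0 = 0 := by simp [hFdef]
  have hFnonneg : ∀ x : ℝ, 0 ≤ F x := by
    intro x
    rcases le_total 0 x with hx | hx
    · have hmono : MonotoneOn F (Set.Ici (0:ℝ)) := by
        apply monotoneOn_of_deriv_nonneg (convex_Ici 0)
          (fun y _ => ((hFder y).differentiableAt.continuousAt.continuousWithinAt))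
          (fun y _ => ((hFder y).differentiableAt.differentiableWithinAt))
        intro y hy
        rw [(hFder y).deriv]
        have : (0:ℝ) ≤ y := le_of_lt (by simpa using hy)
        calc (0:ℝ) = G 0 := hG0.symm
        _ ≤ G y := hGmono this
      have := hmono (Set.self_mem_Ici) (Set.mem_Ici.2 hx) hx
      linarith [hF0 ▸ this]
    · have hmono : AntitoneOn F (Set.Iic (0:ℝ)) := by
        apply antitoneOn_of_deriv_nonpos (convex_Iic 0)
          (fun y _ => ((hFder y).differentiableAt.continuousAt.continuousWithinAt))
          (fun y _ => ((hFder y).differentiableAt.differentiableWithinAt))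
        intro y hy
        rw [(hFder y).deriv]
        have : y ≤ (0:ℝ) := le_of_lt (by simpa using hy)
        calc G y ≤ G 0 := hGmono this
        _ = 0 := hG0
      have := hmono (Set.mem_Iic.2 hx) (Set.self_mem_Iic) hx
      linarith [hF0 ▸ this]
  -- conclude
  have hlog : Real.log (1 - p + p * exp l) ≤ l ^ 2 / 8 + p * l := by
    have := hFnonneg l
    simp only [hFdef] at this
    linarith
  have hDle : 1 - p + p * exp l ≤ exp (l ^ 2 / 8 + p * l) :=
    (Real.log_le_iff_le_exp (hD l)).mp hlog
  have hrw : (1 - p) * exp (-(l * p)) + p * exp (l * (1 - p))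
      = exp (-(l * p)) * (1 - p + p * exp l) := by
    rw [show l * (1 - p) = l + -(l * p) by ring, exp_add]
    ring
  rw [hrw]
  calc exp (-(l * p)) * (1 - p + p * exp l)
      ≤ exp (-(l * p)) * exp (l ^ 2 / 8 + p * l) := by
        exact mul_le_mul_of_nonneg_left hDle (exp_pos _).le
    _ = exp (l ^ 2 / 8) := by rw [← exp_add]; ring_nf

lemma laplace_tail {ε u : ℝ} (hε : 0 < ε) (hu : 0 ≤ u) :
    (volume.withDensity
        (fun x : ℝ => ENNReal.ofReal ((1 / (2 * (1 / ε))) * Real.exp (-|x| / (1 / ε)))))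
      {x : ℝ | u < |x|} ≤ ENNReal.ofReal (Real.exp (-(ε * u))) := by
  have hfun : (fun x : ℝ => ENNReal.ofReal ((1 / (2 * (1 / ε))) * Real.exp (-|x| / (1 / ε))))
      = fun x : ℝ => ENNReal.ofReal (ε / 2 * Real.exp (-(ε * |x|))) := by
    funext x
    have e1 : 1/(2*(1/ε)) = ε/2 := by field_simp
    have e2 : -|x|/(1/ε) = -(ε*|x|) := by field_simp
    rw [e1, e2]
  rw [hfun]
  have hset : MeasurableSet {x : ℝ | u < |x|} := by
    have : {x : ℝ | u < |x|} = abs ⁻¹' Ioi u := rfl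
    rw [this]; exact measurableSet_Ioi.preimage (continuous_abs.measurable)
  rw [withDensity_apply _ hset]
  set f : ℝ → ℝ≥0∞ := fun x => ENNReal.ofReal (ε / 2 * Real.exp (-(ε * |x|))) with hf
  -- Ioi part
  have hIoi : ∫⁻ x in Ioi u, f x = ENNReal.ofReal (Real.exp (-(ε * u)) / 2) := by
    have hcong : ∫⁻ x in Ioi u, f x
        = ∫⁻ x in Ioi u, ENNReal.ofReal (ε / 2 * Real.exp (-(ε * x))) := by
      apply setLIntegral_congr_fun measurableSet_Ioi
      intro x hx
      rw [hf]
      simp only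
      rw [abs_of_pos (lt_of_le_of_lt hu hx)]
    rw [hcong]
    have hint : IntegrableOn (fun x : ℝ => ε / 2 * Real.exp (-(ε * x))) (Ioi u) := by
      have := (exp_neg_integrableOn_Ioi u hε).const_mul (ε/2)
      rw [IntegrableOn]; simpa [neg_mul] using this
    rw [← ofReal_integral_eq_lintegral_ofReal hint
      (ae_of_all _ (fun x => by positivity))]
    congr 1
    have h1 : ∫ x in Ioi u, ε / 2 * Real.exp (-(ε * x))
        = ε / 2 * ∫ x in Ioi u, Real.exp (-(ε * x)) := by
      rw [integral_const_mul]
    have h2 : ∫ x in Ioi u, Real.exp (-(ε * x)) = ε⁻¹ * Real.exp (-(ε * u)) := by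
      have := integral_comp_mul_left_Ioi (fun x => Real.exp (-x)) u hε
      simp only [smul_eq_mul] at this
      rw [this, integral_exp_neg_Ioi]
    rw [h1, h2]
    field_simp
  -- Iic part via symmetry
  have hIic : ∫⁻ x in Iic (-u), f x = ∫⁻ x in Ioi u, f x := by
    have A : MeasurableEmbedding (fun x : ℝ => -x) :=
      (Homeomorph.neg ℝ).isClosedEmbedding.measurableEmbedding
    have hmap : Measure.map (fun x : ℝ => -x) volume = volume :=
      Measure.map_neg_eq_self (volume : Measure ℝ)
    have hfm : Measurable f := by
      rw [hf]
      exact (measurable_const.mul ((measurable_abs.const_mul ε).neg.exp)).ennreal_ofReal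
    have hsl := setLIntegral_map (μ := volume) (g := fun x : ℝ => -x)
      (s := Iic (-u)) measurableSet_Iic hfm A.measurable
    rw [hmap] at hsl
    rw [hsl]
    have hpre : (fun x : ℝ => -x) ⁻¹' Iic (-u) = Ici u := by
      ext x; simp
    rw [hpre]
    have hsymm : ∀ x : ℝ, f (-x) = f x := fun x => by rw [hf]; simp
    simp only [hsymm]
    refine setLIntegral_congr ?_
    exact (Ioi_ae_eq_Ici (a := u)).symm
  calc ∫⁻ x in {x : ℝ | u < |x|}, f x
      ≤ ∫⁻ x in Iic (-u) ∪ Ioi u, f x := by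
        apply lintegral_mono_set
        intro x hx
        simp only [mem_setOf_eq] at hx
        rcases lt_abs.mp hx with h | h
        · exact Or.inr h
        · exact Or.inl (by simp only [mem_Iic]; linarith)
    _ ≤ (∫⁻ x in Iic (-u), f x) + ∫⁻ x in Ioi u, f x := lintegral_union_le f _ _
    _ = ENNReal.ofReal (Real.exp (-(ε * u)) / 2) + ENNReal.ofReal (Real.exp (-(ε * u)) / 2) := by
        rw [hIic, hIoi]
    _ = ENNReal.ofReal (Real.exp (-(ε * u))) := by
        rw [← ENNReal.ofReal_add (by positivity) (by positivity)]
        norm_num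

lemma bern_sum_tail {Ω : Type*} [MeasureSpace Ω] [IsProbabilityMeasure (volume : Measure Ω)]
    {E' : Type*} [MeasurableSpace E'] {m : ℕ} (hm : 0 < m)
    (X : Fin m → Ω → E') (hmeas : ∀ i, Measurable (X i))
    (hindep : iIndepFun X volume)
    (hident : ∀ i, IdentDistrib (X i) (X ⟨0, hm⟩) volume volume)
    (E : Set E') (hE : MeasurableSet E) {s : ℝ} (hs : 0 < s) :
    volume {ω : Ω | s < |(1 / (m : ℝ)) * ∑ i : Fin m, E.indicator (fun _ => (1:ℝ)) (X i ω)
        - (volume (X ⟨0, hm⟩ ⁻¹' E)).toReal|}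
      ≤ ENNReal.ofReal (2 * exp (-2 * m * s ^ 2)) := by
  set p : ℝ := (volume (X ⟨0, hm⟩ ⁻¹' E)).toReal with hp
  have hS0 : MeasurableSet (X ⟨0, hm⟩ ⁻¹' E) := hE.preimage (hmeas _)
  have hp0 : 0 ≤ p := ENNReal.toReal_nonneg
  have hp1 : p ≤ 1 := by
    rw [hp]
    exact ENNReal.toReal_le_of_le_ofReal zero_le_one (by simpa using prob_le_one)
  set g : E' → ℝ := fun e => E.indicator (fun _ => (1:ℝ)) e - p with hg
  have hgmeas : Measurable g := (measurable_const.indicator hE).sub measurable_const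
  set Z : Fin m → Ω → ℝ := fun i => g ∘ X i with hZ
  have hZmeas : ∀ i, Measurable (Z i) := fun i => hgmeas.comp (hmeas i)
  have hZbdd : ∀ i ω, |Z i ω| ≤ 1 := by
    intro i ω
    rw [hZ]
    simp only [Function.comp_apply, hg]
    rw [abs_le]
    by_cases h : X i ω ∈ E <;> simp [indicator_of_mem, indicator_of_notMem, h] <;> constructor <;>
      linarith
  have hindepZ : iIndepFun Z volume :=
    hindep.comp (fun _ => g) (fun _ => hgmeas)
  -- integrability of exp(l * Z i)
  have hintZ : ∀ (i : Fin m) (l : ℝ), Integrable (fun ω => exp (l * Z i ω)) volume := by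
    intro i l
    refine Integrable.mono' (integrable_const (exp |l|))
      ((((hZmeas i).const_mul l).exp).aestronglyMeasurable) (ae_of_all _ fun ω => ?_)
    rw [Real.norm_eq_abs, abs_of_pos (exp_pos _)]
    apply exp_le_exp.2
    calc l * Z i ω ≤ |l * Z i ω| := le_abs_self _
      _ = |l| * |Z i ω| := abs_mul _ _
      _ ≤ |l| * 1 := by have := hZbdd i ω; have := abs_nonneg l; nlinarith
      _ = |l| := mul_one _
  -- mgf of each Z i
  have hmgfZ : ∀ (i : Fin m) (l : ℝ), mgf (Z i) volume l ≤ exp (l ^ 2 / 8) := by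
    intro i l
    have hident' : IdentDistrib (fun ω => exp (l * Z i ω)) (fun ω => exp (l * Z ⟨0, hm⟩ ω))
        volume volume := by
      have := (hident i).comp (u := fun e => exp (l * g e)) ((hgmeas.const_mul l).exp)
      simpa [hZ, Function.comp_def] using this
    have heq : mgf (Z i) volume l = mgf (Z ⟨0, hm⟩) volume l := hident'.integral_eq
    rw [heq]
    have hval : mgf (Z ⟨0, hm⟩) volume l
        = (1 - p) * exp (-(l * p)) + p * exp (l * (1 - p)) := by
      rw [mgf]
      have hpt : ∀ ω, exp (l * Z ⟨0, hm⟩ ω)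
          = (X ⟨0, hm⟩ ⁻¹' E).indicator (fun _ => exp (l * (1 - p))) ω
            + ((X ⟨0, hm⟩ ⁻¹' E)ᶜ).indicator (fun _ => exp (-(l * p))) ω := by
        intro ω
        simp only [hZ, hg, Function.comp_apply]
        by_cases h : X ⟨0, hm⟩ ω ∈ E
        · rw [Set.indicator_of_mem h, Set.indicator_of_mem (show ω ∈ X ⟨0, hm⟩ ⁻¹' E from h),
            Set.indicator_of_notMem (show ω ∉ (X ⟨0, hm⟩ ⁻¹' E)ᶜ from by simpa using h)]
          norm_num
        · rw [Set.indicator_of_notMem h,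
            Set.indicator_of_notMem (show ω ∉ X ⟨0, hm⟩ ⁻¹' E from h),
            Set.indicator_of_mem (show ω ∈ (X ⟨0, hm⟩ ⁻¹' E)ᶜ from by simpa using h)]
          norm_num
      simp_rw [hpt]
      rw [integral_add ((integrable_const _).indicator hS0)
        ((integrable_const _).indicator hS0.compl)]
      rw [integral_indicator_const _ hS0, integral_indicator_const _ hS0.compl]
      rw [measureReal_compl hS0, probReal_univ,
        show volume.real (X ⟨0, hm⟩ ⁻¹' E) = p from rfl]
      simp
      ring
    rw [hval]
    exact hoeffding_mgf_bern hp0 hp1 l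
  -- sum
  set S : Ω → ℝ := ∑ i : Fin m, Z i with hSdef
  have hSmeas : Measurable S := by
    rw [hSdef, Finset.sum_fn]
    exact Finset.measurable_sum _ (fun i _ => hZmeas i)
  have hmgfS : ∀ l : ℝ, mgf S volume l ≤ exp (m * l ^ 2 / 8) := by
    intro l
    rw [hSdef, iIndepFun.mgf_sum hindepZ (fun i => hZmeas i) Finset.univ]
    calc ∏ i : Fin m, mgf (Z i) volume l ≤ ∏ _i : Fin m, exp (l ^ 2 / 8) :=
          Finset.prod_le_prod (fun i _ => mgf_nonneg) (fun i _ => hmgfZ i l)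
      _ = exp (l ^ 2 / 8) ^ m := by simp
      _ = exp (m * l ^ 2 / 8) := by
          rw [← Real.exp_nat_mul]; ring_nf
  have hintS : ∀ l : ℝ, Integrable (fun ω => exp (l * S ω)) volume := by
    intro l
    refine Integrable.mono' (integrable_const (exp (|l| * m)))
      (((hSmeas.const_mul l).exp).aestronglyMeasurable) (ae_of_all _ fun ω => ?_)
    rw [Real.norm_eq_abs, abs_of_pos (exp_pos _)]
    apply exp_le_exp.2
    have hSb : |S ω| ≤ m := by
      rw [hSdef]
      calc |(∑ i : Fin m, Z i) ω| = |∑ i : Fin m, Z i ω| := by simp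
        _ ≤ ∑ i : Fin m, |Z i ω| := Finset.abs_sum_le_sum_abs _ _
        _ ≤ ∑ _i : Fin m, (1:ℝ) := Finset.sum_le_sum (fun i _ => hZbdd i ω)
        _ = m := by simp
    calc l * S ω ≤ |l * S ω| := le_abs_self _
      _ = |l| * |S ω| := abs_mul _ _
      _ ≤ |l| * m := by have := abs_nonneg l; nlinarith
  -- Chernoff both sides
  have hup : volume {ω : Ω | m * s ≤ S ω} ≤ ENNReal.ofReal (exp (-2 * m * s ^ 2)) := by
    calc volume {ω : Ω | m * s ≤ S ω}
        ≤ ENNReal.ofReal (exp (-(4 * s) * (m * s)) * mgf S volume (4 * s)) := by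
          rw [ENNReal.le_ofReal_iff_toReal_le (measure_ne_top _ _)
            (mul_nonneg (exp_pos _).le mgf_nonneg)]
          exact measure_ge_le_exp_mul_mgf (m * s) (by positivity) (hintS (4 * s))
      _ ≤ ENNReal.ofReal (exp (-2 * m * s ^ 2)) := by
          apply ENNReal.ofReal_le_ofReal
          calc exp (-(4 * s) * (m * s)) * mgf S volume (4 * s)
              ≤ exp (-(4 * s) * (m * s)) * exp (m * (4 * s) ^ 2 / 8) :=
                mul_le_mul_of_nonneg_left (hmgfS (4 * s)) (exp_pos _).le
            _ = exp (-2 * m * s ^ 2) := by rw [← exp_add]; ring_nf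
  have hdown : volume {ω : Ω | S ω ≤ -(m * s)} ≤ ENNReal.ofReal (exp (-2 * m * s ^ 2)) := by
    calc volume {ω : Ω | S ω ≤ -(m * s)}
        ≤ ENNReal.ofReal (exp (-(-(4 * s)) * (-(m * s))) * mgf S volume (-(4 * s))) := by
          rw [ENNReal.le_ofReal_iff_toReal_le (measure_ne_top _ _)
            (mul_nonneg (exp_pos _).le mgf_nonneg)]
          exact measure_le_le_exp_mul_mgf (-(m * s)) (by nlinarith) (hintS (-(4 * s)))
      _ ≤ ENNReal.ofReal (exp (-2 * m * s ^ 2)) := by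
          apply ENNReal.ofReal_le_ofReal
          calc exp (-(-(4 * s)) * (-(m * s))) * mgf S volume (-(4 * s))
              ≤ exp (-(-(4 * s)) * (-(m * s))) * exp (m * (-(4 * s)) ^ 2 / 8) :=
                mul_le_mul_of_nonneg_left (hmgfS (-(4 * s))) (exp_pos _).le
            _ = exp (-2 * m * s ^ 2) := by rw [← exp_add]; ring_nf
  -- event inclusion
  have hincl : {ω : Ω | s < |(1 / (m : ℝ)) * ∑ i : Fin m, E.indicator (fun _ => (1:ℝ)) (X i ω)
      - p|} ⊆ {ω : Ω | m * s ≤ S ω} ∪ {ω : Ω | S ω ≤ -(m * s)} := by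
    intro ω hω
    simp only [mem_setOf_eq] at hω
    have hmR : (0:ℝ) < m := by exact_mod_cast hm
    have hSval : S ω = ∑ i : Fin m, E.indicator (fun _ => (1:ℝ)) (X i ω) - m * p := by
      rw [hSdef]
      simp only [Finset.sum_apply, hZ, Function.comp_apply, hg]
      rw [Finset.sum_sub_distrib]
      simp [mul_comm]
    have key : m * s < |S ω| := by
      have habs : |(1 / (m : ℝ)) * ∑ i : Fin m, E.indicator (fun _ => (1:ℝ)) (X i ω) - p|
          = |S ω| / m := by
        rw [hSval, show (1 / (m : ℝ)) * (∑ i : Fin m, E.indicator (fun _ => (1:ℝ)) (X i ω)) - p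
          = ((∑ i : Fin m, E.indicator (fun _ => (1:ℝ)) (X i ω)) - m * p) / m by
            field_simp]
        rw [abs_div, abs_of_pos hmR]
      rw [habs, lt_div_iff₀ hmR] at hω
      linarith
    rcases lt_abs.mp key with h | h
    · exact Or.inl (mem_setOf_eq ▸ le_of_lt h)
    · exact Or.inr (mem_setOf_eq ▸ by linarith)
  calc volume {ω : Ω | s < |(1 / (m : ℝ)) * ∑ i : Fin m, E.indicator (fun _ => (1:ℝ)) (X i ω)
          - p|}
      ≤ volume ({ω : Ω | m * s ≤ S ω} ∪ {ω : Ω | S ω ≤ -(m * s)}) := measure_mono hincl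
    _ ≤ volume {ω : Ω | m * s ≤ S ω} + volume {ω : Ω | S ω ≤ -(m * s)} := measure_union_le _ _
    _ ≤ ENNReal.ofReal (exp (-2 * m * s ^ 2)) + ENNReal.ofReal (exp (-2 * m * s ^ 2)) :=
        add_le_add hup hdown
    _ = ENNReal.ofReal (2 * exp (-2 * m * s ^ 2)) := by
        rw [← ENNReal.ofReal_add (exp_pos _).le (exp_pos _).le]
        ring_nf

theorem private_audit_sample_size {Ω : Type*} [MeasureSpace Ω]
    [IsProbabilityMeasure (volume : Measure Ω)]
    {E' : Type*} [MeasurableSpace E']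
    {A Y : Type*} [Fintype A] [Nonempty A] [Fintype Y] [Nonempty Y]
    (n : A → ℕ) (hn : ∀ a, 0 < n a)
    (X : (a : A) → Fin (n a) → Ω → E')
    (hmeas : ∀ a i, Measurable (X a i))
    (hindep : ∀ a, iIndepFun (X a) volume)
    (hident : ∀ a i, IdentDistrib (X a i) (X a ⟨0, hn a⟩) volume volume)
    (Es : A → Y → Set E') (hEs : ∀ a y, MeasurableSet (Es a y))
    (ε : ℝ) (hε : 0 < ε)
    (r : A → Y → Ω → ℝ) (hrmeas : ∀ a y, Measurable (r a y))
    (hlaw : ∀ a y, Measure.map (r a y) volume =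
      volume.withDensity
        (fun x : ℝ => ENNReal.ofReal ((1 / (2 * (1 / ε))) * Real.exp (-|x| / (1 / ε)))))
    (hrindep : ∀ a y, IndepFun (fun ω => fun i => X a i ω) (r a y) volume)
    (nmin : ℕ) (hnmin : nmin = Finset.univ.inf' Finset.univ_nonempty n)
    (t : ℝ) (ht : 0 < t) (htε : t ≤ ε) :
    volume {ω : Ω | ∃ a : A, ∃ y : Y,
        t < |((1 / (n a : ℝ)) *
                ∑ i : Fin (n a), (Es a y).indicator (fun _ => (1 : ℝ)) (X a i ω)
              + r a y ω / (n a : ℝ)) -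
            (volume (X a ⟨0, hn a⟩ ⁻¹' Es a y)).toReal|} ≤
      ENNReal.ofReal (3 * (Fintype.card A) * (Fintype.card Y) *
        Real.exp (-nmin * t ^ 2 / 2)) ∧
    (∀ δ : ℝ, 0 < δ →
      (nmin : ℝ) ≥ (2 / t ^ 2) *
          Real.log (3 * (Fintype.card A) * (Fintype.card Y) / δ) →
      volume {ω : Ω | ∃ a : A, ∃ y : Y,
          t < |((1 / (n a : ℝ)) *
                  ∑ i : Fin (n a), (Es a y).indicator (fun _ => (1 : ℝ)) (X a i ω)
                + r a y ω / (n a : ℝ)) -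
              (volume (X a ⟨0, hn a⟩ ⁻¹' Es a y)).toReal|} ≤
        ENNReal.ofReal δ) ∧
    (∀ α δ : ℝ, t = α / 2 →
      (2 / t ^ 2) * Real.log (3 * (Fintype.card A) * (Fintype.card Y) / δ) =
        (8 / α ^ 2) * Real.log (3 * (Fintype.card A) * (Fintype.card Y) / δ)) := by
  have hcA : 0 < Fintype.card A := Fintype.card_pos
  have hcY : 0 < Fintype.card Y := Fintype.card_pos
  have hK3 : (0:ℝ) < 3 * (Fintype.card A) * (Fintype.card Y) := by positivity
  have hnminle : ∀ a : A, (nmin : ℝ) ≤ (n a : ℝ) := by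
    intro a
    have : nmin ≤ n a := hnmin ▸ Finset.inf'_le n (Finset.mem_univ a)
    exact_mod_cast this
  -- per-group bound
  have hgroup : ∀ (a : A) (y : Y),
      volume {ω : Ω | t < |((1 / (n a : ℝ)) *
          ∑ i : Fin (n a), (Es a y).indicator (fun _ => (1 : ℝ)) (X a i ω)
          + r a y ω / (n a : ℝ)) - (volume (X a ⟨0, hn a⟩ ⁻¹' Es a y)).toReal|}
        ≤ ENNReal.ofReal (3 * Real.exp (-(n a : ℝ) * t ^ 2 / 2)) := by
    intro a y
    have hna : (0:ℝ) < (n a : ℝ) := by exact_mod_cast hn a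
    have hD := bern_sum_tail (hn a) (X a) (hmeas a) (hindep a) (hident a) (Es a y)
      (hEs a y) (s := t/2) (by positivity)
    have hT : MeasurableSet {x : ℝ | (n a : ℝ) * t / 2 < |x|} := by
      have : {x : ℝ | (n a : ℝ) * t / 2 < |x|} = abs ⁻¹' Ioi ((n a : ℝ) * t / 2) := rfl
      rw [this]; exact measurableSet_Ioi.preimage continuous_abs.measurable
    have hL : volume {ω : Ω | t/2 < |r a y ω / (n a : ℝ)|}
        ≤ ENNReal.ofReal (Real.exp (-(ε * ((n a : ℝ) * t / 2)))) := by
      have hpre : {ω : Ω | t/2 < |r a y ω / (n a : ℝ)|}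
          = r a y ⁻¹' {x : ℝ | (n a : ℝ) * t / 2 < |x|} := by
        ext ω
        simp only [mem_setOf_eq, mem_preimage, abs_div, abs_of_pos hna]
        rw [lt_div_iff₀ hna]
        constructor <;> intro <;> linarith
      rw [hpre, ← Measure.map_apply (hrmeas a y) hT, hlaw a y]
      exact laplace_tail hε (by positivity)
    have hincl : {ω : Ω | t < |((1 / (n a : ℝ)) *
          ∑ i : Fin (n a), (Es a y).indicator (fun _ => (1 : ℝ)) (X a i ω)
          + r a y ω / (n a : ℝ)) - (volume (X a ⟨0, hn a⟩ ⁻¹' Es a y)).toReal|}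
        ⊆ {ω : Ω | t/2 < |(1 / (n a : ℝ)) *
              ∑ i : Fin (n a), (Es a y).indicator (fun _ => (1 : ℝ)) (X a i ω)
              - (volume (X a ⟨0, hn a⟩ ⁻¹' Es a y)).toReal|}
          ∪ {ω : Ω | t/2 < |r a y ω / (n a : ℝ)|} := by
      intro ω hω
      simp only [mem_setOf_eq] at hω
      by_contra hcon
      simp only [mem_union, mem_setOf_eq, not_or, not_lt] at hcon
      obtain ⟨h1, h2⟩ := hcon
      have habs : |((1 / (n a : ℝ)) *
          ∑ i : Fin (n a), (Es a y).indicator (fun _ => (1 : ℝ)) (X a i ω)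
          + r a y ω / (n a : ℝ)) - (volume (X a ⟨0, hn a⟩ ⁻¹' Es a y)).toReal|
          ≤ |(1 / (n a : ℝ)) *
              ∑ i : Fin (n a), (Es a y).indicator (fun _ => (1 : ℝ)) (X a i ω)
              - (volume (X a ⟨0, hn a⟩ ⁻¹' Es a y)).toReal|
            + |r a y ω / (n a : ℝ)| := by
        have := abs_add_le ((1 / (n a : ℝ)) *
            ∑ i : Fin (n a), (Es a y).indicator (fun _ => (1 : ℝ)) (X a i ω)
            - (volume (X a ⟨0, hn a⟩ ⁻¹' Es a y)).toReal) (r a y ω / (n a : ℝ))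
        calc |((1 / (n a : ℝ)) *
            ∑ i : Fin (n a), (Es a y).indicator (fun _ => (1 : ℝ)) (X a i ω)
            + r a y ω / (n a : ℝ)) - (volume (X a ⟨0, hn a⟩ ⁻¹' Es a y)).toReal|
            = |((1 / (n a : ℝ)) *
                ∑ i : Fin (n a), (Es a y).indicator (fun _ => (1 : ℝ)) (X a i ω)
                - (volume (X a ⟨0, hn a⟩ ⁻¹' Es a y)).toReal) + r a y ω / (n a : ℝ)| := by
              ring_nf
          _ ≤ _ := this
      linarith
    calc volume {ω : Ω | t < |((1 / (n a : ℝ)) *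
          ∑ i : Fin (n a), (Es a y).indicator (fun _ => (1 : ℝ)) (X a i ω)
          + r a y ω / (n a : ℝ)) - (volume (X a ⟨0, hn a⟩ ⁻¹' Es a y)).toReal|}
        ≤ volume ({ω : Ω | t/2 < |(1 / (n a : ℝ)) *
              ∑ i : Fin (n a), (Es a y).indicator (fun _ => (1 : ℝ)) (X a i ω)
              - (volume (X a ⟨0, hn a⟩ ⁻¹' Es a y)).toReal|}
            ∪ {ω : Ω | t/2 < |r a y ω / (n a : ℝ)|}) := measure_mono hincl
      _ ≤ _ + _ := measure_union_le _ _
      _ ≤ ENNReal.ofReal (2 * Real.exp (-2 * (n a : ℝ) * (t/2) ^ 2))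
          + ENNReal.ofReal (Real.exp (-(ε * ((n a : ℝ) * t / 2)))) := add_le_add hD hL
      _ ≤ ENNReal.ofReal (2 * Real.exp (-(n a : ℝ) * t ^ 2 / 2))
          + ENNReal.ofReal (Real.exp (-(n a : ℝ) * t ^ 2 / 2)) := by
          apply add_le_add
          · apply ENNReal.ofReal_le_ofReal
            have : -2 * (n a : ℝ) * (t/2) ^ 2 = -(n a : ℝ) * t ^ 2 / 2 := by ring
            rw [this]
          · apply ENNReal.ofReal_le_ofReal
            apply Real.exp_le_exp.2
            nlinarith [mul_nonneg (mul_nonneg (sub_nonneg.2 htε) hna.le) ht.le]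
      _ = ENNReal.ofReal (3 * Real.exp (-(n a : ℝ) * t ^ 2 / 2)) := by
          rw [← ENNReal.ofReal_add (by positivity) (by positivity)]
          ring_nf
  -- union bound
  have hmain : volume {ω : Ω | ∃ a : A, ∃ y : Y,
      t < |((1 / (n a : ℝ)) *
          ∑ i : Fin (n a), (Es a y).indicator (fun _ => (1 : ℝ)) (X a i ω)
          + r a y ω / (n a : ℝ)) - (volume (X a ⟨0, hn a⟩ ⁻¹' Es a y)).toReal|}
      ≤ ENNReal.ofReal (3 * (Fintype.card A) * (Fintype.card Y) *
          Real.exp (-nmin * t ^ 2 / 2)) := by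
    have hU : {ω : Ω | ∃ a : A, ∃ y : Y,
        t < |((1 / (n a : ℝ)) *
            ∑ i : Fin (n a), (Es a y).indicator (fun _ => (1 : ℝ)) (X a i ω)
            + r a y ω / (n a : ℝ)) - (volume (X a ⟨0, hn a⟩ ⁻¹' Es a y)).toReal|}
        = ⋃ q : A × Y, {ω : Ω | t < |((1 / (n q.1 : ℝ)) *
            ∑ i : Fin (n q.1), (Es q.1 q.2).indicator (fun _ => (1 : ℝ)) (X q.1 i ω)
            + r q.1 q.2 ω / (n q.1 : ℝ))
            - (volume (X q.1 ⟨0, hn q.1⟩ ⁻¹' Es q.1 q.2)).toReal|} := by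
      ext ω
      simp only [mem_setOf_eq, mem_iUnion, Prod.exists]
    rw [hU]
    calc volume (⋃ q : A × Y, _) ≤ ∑' q : A × Y, volume _ := measure_iUnion_le _
      _ = ∑ q : A × Y, volume {ω : Ω | t < |((1 / (n q.1 : ℝ)) *
            ∑ i : Fin (n q.1), (Es q.1 q.2).indicator (fun _ => (1 : ℝ)) (X q.1 i ω)
            + r q.1 q.2 ω / (n q.1 : ℝ))
            - (volume (X q.1 ⟨0, hn q.1⟩ ⁻¹' Es q.1 q.2)).toReal|} := tsum_fintype _
      _ ≤ ∑ _q : A × Y, ENNReal.ofReal (3 * Real.exp (-(nmin : ℝ) * t ^ 2 / 2)) := by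
          apply Finset.sum_le_sum
          intro q _
          refine (hgroup q.1 q.2).trans (ENNReal.ofReal_le_ofReal ?_)
          have hle := hnminle q.1
          have := Real.exp_le_exp.2 (show -(n q.1 : ℝ) * t ^ 2 / 2 ≤ -(nmin : ℝ) * t ^ 2 / 2
            by nlinarith)
          linarith
      _ = ENNReal.ofReal (3 * (Fintype.card A) * (Fintype.card Y) *
          Real.exp (-nmin * t ^ 2 / 2)) := by
          rw [Finset.sum_const, Finset.card_univ, Fintype.card_prod, nsmul_eq_mul]
          rw [← ENNReal.ofReal_natCast (Fintype.card A * Fintype.card Y),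
            ← ENNReal.ofReal_mul (by positivity)]
          congr 1
          push_cast
          ring
  refine ⟨hmain, ?_, ?_⟩
  · intro δ hδ hge
    refine hmain.trans (ENNReal.ofReal_le_ofReal ?_)
    set K : ℝ := 3 * (Fintype.card A) * (Fintype.card Y) with hK
    have hKpos : 0 < K := hK3
    have hlog : Real.log (K / δ) ≤ (nmin : ℝ) * t ^ 2 / 2 := by
      have h2 : (2 / t ^ 2) * Real.log (K / δ) ≤ (nmin : ℝ) := hge
      have ht2 : (0:ℝ) < t ^ 2 := by positivity
      have h3 := mul_le_mul_of_nonneg_left h2 (by positivity : (0:ℝ) ≤ t ^ 2 / 2)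
      have h4 : (t ^ 2 / 2) * ((2 / t ^ 2) * Real.log (K / δ)) = Real.log (K / δ) := by
        field_simp
      rw [h4] at h3
      linarith
    have hexp : Real.exp (-(nmin : ℝ) * t ^ 2 / 2) ≤ δ / K := by
      have : Real.exp (-(nmin : ℝ) * t ^ 2 / 2) ≤ Real.exp (-Real.log (K / δ)) := by
        apply Real.exp_le_exp.2
        linarith
      calc Real.exp (-(nmin : ℝ) * t ^ 2 / 2) ≤ Real.exp (-Real.log (K / δ)) := this
        _ = δ / K := by
            rw [Real.exp_neg, Real.exp_log (by positivity)]
            field_simp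
    calc K * Real.exp (-(nmin : ℝ) * t ^ 2 / 2) ≤ K * (δ / K) :=
          mul_le_mul_of_nonneg_left hexp hKpos.le
      _ = δ := by field_simp
  · intro α δ hteq
    have hα : α ≠ 0 := by
      intro h
      rw [h] at hteq
      simp at hteq
      linarith [ht, hteq]
    congr 1
    rw [hteq]
    field_simp
    ring
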